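/- Let h be a Γ-equivariant continuous hermitian metric, let K ⊆ G be a compact subgroup and let dk denote the normalized Haar probability measure on K. Define h'(g)(v, w) := ∫_K h(gk)(v, w) dk for g ∈ G and v, w ∈ V. Then h' is again a Γ-equivariant continuous hermitian metric (in particular each h'(g) is a hermitian inner product on V), and h' is right-K-invariant: h'(gk₀)(v, w) = h'(g)(v, w) for all g ∈ G, k₀ ∈ K and v, w ∈ V. -/

import Mathlib

open MeasureTheory

/-- A `Γ`-equivariant continuous hermitian metric on the trivial `V`-bundle over `G`:
a continuous assignment `g ↦ h g` of a hermitian inner product on `V`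
(conjugate-linear in the first variable, linear in the second) satisfying
`h (γ * g) (χ γ v) (χ γ w) = h g v w`. -/
def IsEquivariantHermitianMetric {G V : Type*} [Group G] [TopologicalSpace G]
    [NormedAddCommGroup V] [NormedSpace ℂ V]
    (Γ : Subgroup G) (χ : Γ →* (V →ₗ[ℂ] V)ˣ) (h : G → V → V → ℂ) : Prop :=
  Continuous (fun p : G × V × V => h p.1 p.2.1 p.2.2) ∧
  (∀ (g : G) (v w w' : V), h g v (w + w') = h g v w + h g v w') ∧
  (∀ (g : G) (a : ℂ) (v w : V), h g v (a • w) = a * h g v w) ∧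
  (∀ (g : G) (v w : V), h g w v = (starRingEnd ℂ) (h g v w)) ∧
  (∀ (g : G) (v : V), v ≠ 0 → 0 < (h g v v).re) ∧
  (∀ (γ : Γ) (g : G) (v w : V),
    h ((γ : G) * g) ((χ γ : V →ₗ[ℂ] V) v) ((χ γ : V →ₗ[ℂ] V) w) = h g v w)

/-- Averaging a `Γ`-equivariant continuous hermitian metric over a
compact subgroup `K` (with respect to the normalized Haar probability measure on `K`)
yields again a `Γ`-equivariant continuous hermitian metric, which moreover is
right-`K`-invariant. -/
theorem average_metric_over_compact_subgroup
    {G V : Type*} [Group G] [TopologicalSpace G] [IsTopologicalGroup G]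
    [LocallyCompactSpace G] [T2Space G] [SecondCountableTopology G]
    [MeasurableSpace G] [BorelSpace G] (μ : Measure G)
    [μ.IsHaarMeasure] [μ.IsMulRightInvariant]
    [NormedAddCommGroup V] [NormedSpace ℂ V] [FiniteDimensional ℂ V] [Nontrivial V]
    (Γ : Subgroup G) [DiscreteTopology Γ]
    (hcocompact : ∃ C : Set G, IsCompact C ∧ ∀ g : G, ∃ γ ∈ Γ, γ * g ∈ C)
    (χ : Γ →* (V →ₗ[ℂ] V)ˣ)
    (h : G → V → V → ℂ) (hh : IsEquivariantHermitianMetric Γ χ h)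
    (K : Subgroup G) (hK : IsCompact (K : Set G))
    (ν : Measure K) [ν.IsHaarMeasure] [IsProbabilityMeasure ν] :
    IsEquivariantHermitianMetric Γ χ
      (fun g v w => ∫ k : K, h (g * (k : G)) v w ∂ν) ∧
    ∀ (g : G) (k₀ : K) (v w : V),
      (∫ k : K, h ((g * (k₀ : G)) * (k : G)) v w ∂ν) =
      (∫ k : K, h (g * (k : G)) v w ∂ν) := by
  obtain ⟨hc, hadd, hsmul, hconj, hpos, hequiv⟩ := hh
  haveI : CompactSpace K := isCompact_iff_compactSpace.mp hK
  haveI : BorelSpace K := Subtype.borelSpace (K : Set G)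
  -- continuity of the relevant integrands
  have hcont : ∀ (g : G) (v w : V), Continuous (fun k : K => h (g * (k : G)) v w) := by
    intro g v w
    exact hc.comp (((continuous_const.mul continuous_subtype_val).prodMk
      (continuous_const.prodMk continuous_const)))
  have hint : ∀ (g : G) (v w : V), Integrable (fun k : K => h (g * (k : G)) v w) ν := by
    intro g v w
    exact (hcont g v w).integrable_of_hasCompactSupport
      (HasCompactSupport.of_compactSpace _)
  refine ⟨⟨?_, ?_, ?_, ?_, ?_, ?_⟩, ?_⟩
  · -- continuity
    have hF : Continuous (Function.uncurry
        (fun (p : G × V × V) (k : K) => h (p.1 * (k : G)) p.2.1 p.2.2)) := by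
      exact hc.comp (((continuous_fst.fst.mul
        (continuous_subtype_val.comp continuous_snd)).prodMk
        (continuous_fst.snd.fst.prodMk continuous_fst.snd.snd)))
    have := continuous_parametric_integral_of_continuous (μ := ν) hF isCompact_univ
    simpa [Measure.restrict_univ] using this
  · intro g v w w'
    simp only [hadd]
    exact integral_add (hint g v w) (hint g v w')
  · intro g a v w
    simp only [hsmul]
    exact integral_const_mul a _
  · intro g v w
    calc (∫ k : K, h (g * (k : G)) w v ∂ν)
        = ∫ k : K, (starRingEnd ℂ) (h (g * (k : G)) v w) ∂ν :=
          integral_congr_ae (Filter.Eventually.of_forall fun k => hconj _ v w)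
      _ = (starRingEnd ℂ) (∫ k : K, h (g * (k : G)) v w ∂ν) := integral_conj
  · intro g v hv
    have hre : (∫ k : K, h (g * (k : G)) v v ∂ν).re
        = ∫ k : K, (h (g * (k : G)) v v).re ∂ν := (integral_re (hint g v v)).symm
    rw [hre]
    have hposf : ∀ k : K, 0 < (h (g * (k : G)) v v).re := fun k => hpos _ v hv
    have hnn : 0 ≤ fun k : K => (h (g * (k : G)) v v).re := fun k => (hposf k).le
    have hinti : Integrable (fun k : K => (h (g * (k : G)) v v).re) ν :=
      (hint g v v).re
    rw [integral_pos_iff_support_of_nonneg hnn hinti]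
    have : Function.support (fun k : K => (h (g * (k : G)) v v).re) = Set.univ := by
      ext k; simp [Function.support, (hposf k).ne']
    rw [this]
    simp
  · intro γ g v w
    simp only [mul_assoc]
    exact integral_congr_ae (Filter.Eventually.of_forall fun k => hequiv γ (g * (k : G)) v w)
  · -- right K-invariance, via left invariance of ν
    intro g k₀ v w
    have := integral_mul_left_eq_self (μ := ν)
      (fun k : K => h (g * (k : G)) v w) k₀
    simpa [mul_assoc] using this
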